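/- Let B be a base of the layered direct sum matroid H⟨F⟩ and let e ∈ F \ B. Then: (a) there is an integer z such that the fundamental circuit C_{H⟨F⟩}(e,B) is a circuit of the z-th summand matroid T_z-matroid; (b) C_{H⟨F⟩}(e,B) ⊆ C_H(e,B); and (c) g ≻_H f for every f ∈ C_{H⟨F⟩}(e,B) and every g ∈ C_H(e,B) \ C_{H⟨F⟩}(e,B). -/

import Mathlib

open Finset
open scoped Classical

/-- A matroid on a finite ground type `U`, given by its independent sets. -/
structure FinMatroid (U : Type*) [DecidableEq U] [Fintype U] where
  Indep : Finset U → Prop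
  empty_indep : Indep ∅
  subset_indep : ∀ ⦃I J : Finset U⦄, I ⊆ J → Indep J → Indep I
  exchange : ∀ ⦃I J : Finset U⦄, Indep I → Indep J → I.card < J.card →
    ∃ u ∈ J, u ∉ I ∧ Indep (insert u I)

namespace FinMatroid

variable {U : Type*} [DecidableEq U] [Fintype U]

/-- A circuit: an inclusion-wise minimal dependent set. -/
def Circuit (M : FinMatroid U) (C : Finset U) : Prop :=
  ¬ M.Indep C ∧ ∀ D ⊂ C, M.Indep D

/-- `sp M I`: elements `u ∉ I` with `I + u` dependent. -/
def sp (M : FinMatroid U) (I : Finset U) : Set U :=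
  {u | u ∉ I ∧ ¬ M.Indep (insert u I)}

/-- The fundamental circuit of `u` for the independent set `I`
(for `u ∈ sp M I` this is the unique circuit contained in `I + u`). -/
noncomputable def fundC (M : FinMatroid U) (I : Finset U) (u : U) : Finset U :=
  (insert u I).filter (fun w => M.Indep ((insert u I).erase w))

/-- The rank of a set: maximum size of an independent subset. -/
noncomputable def rk (M : FinMatroid U) (X : Finset U) : ℕ :=
  ((X.powerset).filter (fun I => M.Indep I)).sup Finset.card

end FinMatroid

variable {U : Type*} [DecidableEq U] [Fintype U]

/-- Independence predicate of the restriction of an independence system to `X`. -/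
def RestrictIndep (Ind : Finset U → Prop) (X : Finset U) (I : Finset U) : Prop :=
  I ⊆ X ∧ Ind I

/-- Rank function associated with an independence predicate. -/
noncomputable def rkOf (Ind : Finset U → Prop) (X : Finset U) : ℕ :=
  ((X.powerset).filter Ind).sup Finset.card

/-- Independence predicate of the contraction by `X`:
`I ⊆ U \ X` is independent iff `r(I ∪ X) - r(X) = |I|`. -/
def ContractIndepOf (Ind : Finset U → Prop) (X I : Finset U) : Prop :=
  Disjoint I X ∧ rkOf Ind (I ∪ X) = rkOf Ind X + I.card

/-- A base: a maximal independent set. -/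
def BaseOf (Ind : Finset U → Prop) (B : Finset U) : Prop :=
  Ind B ∧ ∀ J, Ind J → B ⊆ J → J = B

/-- A circuit of a general independence system. -/
def CircuitOf (Ind : Finset U → Prop) (C : Finset U) : Prop :=
  ¬ Ind C ∧ ∀ D ⊂ C, Ind D

namespace FundAux
variable (M : FinMatroid U)

lemma card_le_rk {I X : Finset U} (hI : M.Indep I) (hIX : I ⊆ X) :
    I.card ≤ rkOf M.Indep X :=
  Finset.le_sup (by simp [Finset.mem_filter, Finset.mem_powerset, hIX, hI])

lemma rk_le_card (X : Finset U) : rkOf M.Indep X ≤ X.card := by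
  apply Finset.sup_le
  intro I hI
  simp only [Finset.mem_filter, Finset.mem_powerset] at hI
  exact Finset.card_le_card hI.1

lemma rk_mono {X Y : Finset U} (h : X ⊆ Y) : rkOf M.Indep X ≤ rkOf M.Indep Y := by
  apply Finset.sup_le
  intro I hI
  simp only [Finset.mem_filter, Finset.mem_powerset] at hI
  exact card_le_rk M hI.2 (hI.1.trans h)

lemma exists_rk_witness (X : Finset U) :
    ∃ I, I ⊆ X ∧ M.Indep I ∧ I.card = rkOf M.Indep X := by
  have hne : ((X.powerset).filter M.Indep).Nonempty :=
    ⟨∅, by simp [M.empty_indep]⟩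
  obtain ⟨I, hI, hEq⟩ := Finset.exists_mem_eq_sup _ hne Finset.card
  simp only [Finset.mem_filter, Finset.mem_powerset] at hI
  exact ⟨I, hI.1, hI.2, hEq.symm⟩

lemma indep_of_rk_eq_card {X : Finset U} (h : rkOf M.Indep X = X.card) : M.Indep X := by
  obtain ⟨I, hIX, hI, hcard⟩ := exists_rk_witness M X
  have : I = X := Finset.eq_of_subset_of_card_le hIX (by omega)
  rwa [← this]

lemma rk_union_card_le (A B : Finset U) :
    rkOf M.Indep (A ∪ B) ≤ rkOf M.Indep A + B.card := by
  apply Finset.sup_le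
  intro I hI
  simp only [Finset.mem_filter, Finset.mem_powerset] at hI
  have hsub : I \ B ⊆ A := by
    intro x hx
    simp only [Finset.mem_sdiff] at hx
    rcases Finset.mem_union.mp (hI.1 hx.1) with h | h
    · exact h
    · exact absurd h hx.2
  have h1 : (I \ B).card ≤ rkOf M.Indep A :=
    card_le_rk M (M.subset_indep (Finset.sdiff_subset) hI.2) hsub
  have h2 : (I \ B).card + (I ∩ B).card = I.card := Finset.card_sdiff_add_card_inter I B
  have h3 : (I ∩ B).card ≤ B.card := Finset.card_le_card (Finset.inter_subset_right)
  omega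

lemma exists_extension_aux (X : Finset U) :
    ∀ k (I : Finset U), rkOf M.Indep X - I.card ≤ k → M.Indep I → I ⊆ X →
    ∃ J, I ⊆ J ∧ J ⊆ X ∧ M.Indep J ∧ J.card = rkOf M.Indep X := by
  intro k
  induction k with
  | zero =>
    intro I hk hI hIX
    have := card_le_rk M hI hIX
    exact ⟨I, Finset.Subset.rfl, hIX, hI, by omega⟩
  | succ k ih =>
    intro I hk hI hIX
    by_cases h : I.card = rkOf M.Indep X
    · exact ⟨I, Finset.Subset.rfl, hIX, hI, h⟩
    · have hlt : I.card < rkOf M.Indep X := lt_of_le_of_ne (card_le_rk M hI hIX) h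
      obtain ⟨K, hKX, hK, hKcard⟩ := exists_rk_witness M X
      obtain ⟨u, huK, huI, hu⟩ := M.exchange hI hK (by omega)
      obtain ⟨J, hJ1, hJ2, hJ3, hJ4⟩ := ih (insert u I)
        (by rw [Finset.card_insert_of_notMem huI]; omega) hu
        (Finset.insert_subset (hKX huK) hIX)
      exact ⟨J, (Finset.subset_insert u I).trans hJ1, hJ2, hJ3, hJ4⟩

lemma exists_extension {I X : Finset U} (hI : M.Indep I) (hIX : I ⊆ X) :
    ∃ J, I ⊆ J ∧ J ⊆ X ∧ M.Indep J ∧ J.card = rkOf M.Indep X :=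
  exists_extension_aux M X _ I le_rfl hI hIX

lemma rk_submod (A B : Finset U) :
    rkOf M.Indep (A ∪ B) + rkOf M.Indep (A ∩ B) ≤ rkOf M.Indep A + rkOf M.Indep B := by
  obtain ⟨I, hIX, hI, hIcard⟩ := exists_rk_witness M (A ∩ B)
  obtain ⟨J, hIJ, hJX, hJ, hJcard⟩ := exists_extension M hI
    (hIX.trans (Finset.inter_subset_union))
  have h1 : (J ∩ A).card ≤ rkOf M.Indep A :=
    card_le_rk M (M.subset_indep (Finset.inter_subset_left) hJ) (Finset.inter_subset_right)
  have h2 : (J ∩ B).card ≤ rkOf M.Indep B :=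
    card_le_rk M (M.subset_indep (Finset.inter_subset_left) hJ) (Finset.inter_subset_right)
  have h3 : (J ∩ A) ∪ (J ∩ B) = J := by
    rw [← Finset.inter_union_distrib_left]
    exact Finset.inter_eq_left.mpr hJX
  have h4 : (J ∩ A) ∩ (J ∩ B) = J ∩ (A ∩ B) := by
    ext x; simp; tauto
  have h5 : (J ∩ A).card + (J ∩ B).card = J.card + (J ∩ (A ∩ B)).card := by
    have := Finset.card_union_add_card_inter (J ∩ A) (J ∩ B)
    rw [h3, h4] at this
    omega
  have h6 : I ⊆ J ∩ (A ∩ B) := Finset.subset_inter hIJ hIX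
  have h7 : I.card ≤ (J ∩ (A ∩ B)).card := Finset.card_le_card h6
  omega

end FundAux
namespace FundAux
variable {U : Type*} [DecidableEq U] [Fintype U] (M : FinMatroid U)

lemma rk_union_eq_of_spans {X Z Y : Finset U}
    (h : rkOf M.Indep (Z ∪ Y) = rkOf M.Indep Z) :
    rkOf M.Indep (X ∪ Z ∪ Y) = rkOf M.Indep (X ∪ Z) := by
  apply le_antisymm
  · have hsub := rk_submod M (X ∪ Z) (Z ∪ Y)
    have h1 : (X ∪ Z) ∪ (Z ∪ Y) = X ∪ Z ∪ Y := by ext x; simp only [Finset.mem_union]; tauto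
    have h2 : Z ⊆ (X ∪ Z) ∩ (Z ∪ Y) := by intro x hx; simp [hx]
    have h3 := rk_mono M h2
    rw [h1, h] at hsub
    omega
  · exact rk_mono M (Finset.subset_union_left)

lemma rk_insert_le (Z : Finset U) (t : U) :
    rkOf M.Indep (insert t Z) ≤ rkOf M.Indep Z + 1 := by
  have := rk_union_card_le M Z {t}
  have h : Z ∪ {t} = insert t Z := by ext x; simp
  rw [h] at this
  simpa using this

lemma rk_union_eq_of_spans_each {Z Y : Finset U}
    (h : ∀ t ∈ Y, rkOf M.Indep (insert t Z) = rkOf M.Indep Z) :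
    rkOf M.Indep (Z ∪ Y) = rkOf M.Indep Z := by
  induction Y using Finset.induction with
  | empty => simp
  | @insert t Y' ht ih =>
    have hY' := ih (fun s hs => h s (Finset.mem_insert_of_mem hs))
    have ht' : rkOf M.Indep (Z ∪ {t}) = rkOf M.Indep Z := by
      have := h t (Finset.mem_insert_self t Y')
      have he : Z ∪ {t} = insert t Z := by ext x; simp
      rw [he]; exact this
    have := rk_union_eq_of_spans M (X := Y') (Z := Z) (Y := {t}) ht'
    have he2 : Y' ∪ Z ∪ {t} = Z ∪ insert t Y' := by ext x; simp; tauto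
    have he3 : Y' ∪ Z = Z ∪ Y' := Finset.union_comm _ _
    rw [he2, he3] at this
    rw [this, hY']

lemma contract_rk_subset {X I J : Finset U} (hIJ : I ⊆ J)
    (hrk : rkOf M.Indep (J ∪ X) = rkOf M.Indep X + J.card) :
    rkOf M.Indep (I ∪ X) = rkOf M.Indep X + I.card := by
  have h1 : rkOf M.Indep (I ∪ X) ≤ rkOf M.Indep X + I.card := by
    have := rk_union_card_le M X I
    rwa [Finset.union_comm] at this
  have h2 : rkOf M.Indep (J ∪ X) ≤ rkOf M.Indep (I ∪ X) + (J \ I).card := by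
    have := rk_union_card_le M (I ∪ X) (J \ I)
    have hset : (I ∪ X) ∪ (J \ I) = J ∪ X := by
      ext x
      have hx : x ∈ I → x ∈ J := fun h => hIJ h
      simp only [Finset.mem_union, Finset.mem_sdiff]
      tauto
    rwa [hset] at this
  have h3 : (J \ I).card = J.card - I.card := Finset.card_sdiff_of_subset hIJ
  have h4 : I.card ≤ J.card := Finset.card_le_card hIJ
  omega

lemma circuit_rk {C : Finset U} (hC : M.Circuit C) :
    rkOf M.Indep C + 1 = C.card := by
  have hne : C.Nonempty := by
    rcases Finset.eq_empty_or_nonempty C with h | h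
    · exact absurd (h ▸ M.empty_indep) hC.1
    · exact h
  obtain ⟨x, hx⟩ := hne
  have hle : rkOf M.Indep C ≤ C.card - 1 := by
    apply Finset.sup_le
    intro I hI
    simp only [Finset.mem_filter, Finset.mem_powerset] at hI
    have : I ≠ C := fun h => hC.1 (h ▸ hI.2)
    have hss : I ⊂ C := lt_of_le_of_ne hI.1 this
    have := Finset.card_lt_card hss
    omega
  have hge : C.card - 1 ≤ rkOf M.Indep C := by
    have hind : M.Indep (C.erase x) := hC.2 _ (Finset.erase_ssubset hx)
    have := card_le_rk M hind (Finset.erase_subset x C)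
    rw [Finset.card_erase_of_mem hx] at this
    exact this
  have : 1 ≤ C.card := Finset.card_pos.mpr ⟨x, hx⟩
  omega

lemma mem_circuit_of_subset_insert {B C : Finset U} {e : U} (hB : M.Indep B)
    (hC : M.Circuit C) (hs : C ⊆ insert e B) : e ∈ C := by
  by_contra he
  have : C ⊆ B := fun x hx => by
    rcases Finset.mem_insert.mp (hs hx) with h | h
    · exact absurd (h ▸ hx) he
    · exact h
  exact hC.1 (M.subset_indep this hB)

lemma circuit_unique {B C₁ C₂ : Finset U} {e : U} (hB : M.Indep B)
    (h1 : M.Circuit C₁) (h2 : M.Circuit C₂)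
    (hs1 : C₁ ⊆ insert e B) (hs2 : C₂ ⊆ insert e B) : C₁ = C₂ := by
  by_contra hne
  have he1 : e ∈ C₁ := mem_circuit_of_subset_insert M hB h1 hs1
  have he2 : e ∈ C₂ := mem_circuit_of_subset_insert M hB h2 hs2
  have hint : C₁ ∩ C₂ ⊂ C₁ := by
    refine lt_of_le_of_ne (Finset.inter_subset_left) ?_
    intro h
    have hsub : C₁ ⊆ C₂ := by rw [← h]; exact Finset.inter_subset_right
    have : C₁ ⊂ C₂ := lt_of_le_of_ne hsub hne
    exact h1.1 (h2.2 _ this)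
  have hintind : M.Indep (C₁ ∩ C₂) := h1.2 _ hint
  have hintrk : (C₁ ∩ C₂).card ≤ rkOf M.Indep (C₁ ∪ C₂) := by
    exact card_le_rk M hintind (Finset.inter_subset_union)
  have hsm := rk_submod M C₁ C₂
  have hc1 := circuit_rk M h1
  have hc2 := circuit_rk M h2
  have hintc : rkOf M.Indep (C₁ ∩ C₂) = (C₁ ∩ C₂).card :=
    le_antisymm (rk_le_card M _) (card_le_rk M hintind Finset.Subset.rfl)
  -- the union minus e is independent, contained in B
  have hers : (C₁ ∪ C₂).erase e ⊆ B := by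
    intro x hx
    obtain ⟨hxe, hxu⟩ := Finset.mem_erase.mp hx
    rcases Finset.mem_union.mp hxu with h | h
    · rcases Finset.mem_insert.mp (hs1 h) with h' | h'
      · exact absurd h' hxe
      · exact h'
    · rcases Finset.mem_insert.mp (hs2 h) with h' | h'
      · exact absurd h' hxe
      · exact h'
  have hersind : M.Indep ((C₁ ∪ C₂).erase e) := M.subset_indep hers hB
  have h5 : ((C₁ ∪ C₂).erase e).card ≤ rkOf M.Indep (C₁ ∪ C₂) :=
    card_le_rk M hersind (Finset.erase_subset e _)
  have h6 : ((C₁ ∪ C₂).erase e).card = (C₁ ∪ C₂).card - 1 :=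
    Finset.card_erase_of_mem (Finset.mem_union_left _ he1)
  have h7 : (C₁ ∪ C₂).card + (C₁ ∩ C₂).card = C₁.card + C₂.card :=
    Finset.card_union_add_card_inter C₁ C₂
  have h8 : 1 ≤ (C₁ ∪ C₂).card := Finset.card_pos.mpr ⟨e, Finset.mem_union_left _ he1⟩
  omega

lemma exists_circuit_subset (X : Finset U) (h : ¬ M.Indep X) :
    ∃ C, C ⊆ X ∧ M.Circuit C := by
  induction X using Finset.strongInduction with
  | _ X ih =>
    by_cases hmin : ∀ D ⊂ X, M.Indep D
    · exact ⟨X, Finset.Subset.rfl, h, hmin⟩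
    · push_neg at hmin
      obtain ⟨D, hDX, hD⟩ := hmin
      obtain ⟨C, hCD, hC⟩ := ih D hDX hD
      exact ⟨C, hCD.trans hDX.subset, hC⟩

end FundAux

namespace FundAux
variable {U : Type*} [DecidableEq U] [Fintype U] (M : FinMatroid U)

/-- Union of the layers `T j` for `j < k`. -/
def layerUnion (n : ℕ) (T : Fin n → Finset U) (k : ℕ) : Finset U :=
  (Finset.univ.filter (fun j : Fin n => (j : ℕ) < k)).biUnion T

lemma layerUnion_zero (n : ℕ) (T : Fin n → Finset U) : layerUnion n T 0 = ∅ := by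
  ext x; simp [layerUnion]

lemma layerUnion_succ {n : ℕ} (T : Fin n → Finset U) {k : ℕ} (hk : k < n) :
    layerUnion n T (k + 1) = layerUnion n T k ∪ T ⟨k, hk⟩ := by
  ext x
  simp only [layerUnion, Finset.mem_biUnion, Finset.mem_filter, Finset.mem_union,
    Finset.mem_univ, true_and]
  constructor
  · rintro ⟨j, hj, hx⟩
    by_cases h : (j : ℕ) < k
    · exact Or.inl ⟨j, h, hx⟩
    · have hjk : (j : ℕ) = k := by omega
      have : j = ⟨k, hk⟩ := Fin.ext (by simp [hjk])
      exact Or.inr (this ▸ hx)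
  · rintro (⟨j, hj, hx⟩ | hx)
    · exact ⟨j, by omega, hx⟩
    · exact ⟨⟨k, hk⟩, by simp, hx⟩

lemma layerUnion_succ_ge {n : ℕ} (T : Fin n → Finset U) {k : ℕ} (hk : n ≤ k) :
    layerUnion n T (k + 1) = layerUnion n T k := by
  ext x
  simp only [layerUnion, Finset.mem_biUnion, Finset.mem_filter, Finset.mem_univ, true_and]
  constructor
  · rintro ⟨j, hj, hx⟩; exact ⟨j, by have := j.isLt; omega, hx⟩
  · rintro ⟨j, hj, hx⟩; exact ⟨j, by omega, hx⟩

lemma disjoint_layerUnion {n : ℕ} {T : Fin n → Finset U}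
    (hdisj : ∀ i j : Fin n, i ≠ j → Disjoint (T i) (T j))
    {i : Fin n} {k : ℕ} (hik : k ≤ (i : ℕ)) :
    Disjoint (T i) (layerUnion n T k) := by
  rw [layerUnion, Finset.disjoint_biUnion_right]
  intro j hj
  rw [Finset.mem_filter] at hj
  refine hdisj i j (fun h => ?_)
  subst h
  omega

lemma step_rank {n : ℕ} {T : Fin n → Finset U}
    (hdisj : ∀ i j : Fin n, i ≠ j → Disjoint (T i) (T j)) (B : Finset U)
    (hind : ∀ k (hk : k < n),
      rkOf M.Indep ((B ∩ T ⟨k, hk⟩) ∪ layerUnion n T k)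
        = rkOf M.Indep (layerUnion n T k) + (B ∩ T ⟨k, hk⟩).card)
    (hmax : ∀ k (hk : k < n), ∀ t ∈ T ⟨k, hk⟩,
      rkOf M.Indep (insert t ((B ∩ T ⟨k, hk⟩) ∪ layerUnion n T k))
        = rkOf M.Indep ((B ∩ T ⟨k, hk⟩) ∪ layerUnion n T k)) :
    ∀ k : ℕ, rkOf M.Indep (layerUnion n T k) = (B ∩ layerUnion n T k).card ∧
      rkOf M.Indep (B ∩ layerUnion n T k) = (B ∩ layerUnion n T k).card := by
  intro k
  induction k with
  | zero =>
    rw [layerUnion_zero]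
    simp only [Finset.inter_empty, Finset.card_empty]
    constructor <;>
      exact le_antisymm (by simpa using rk_le_card M ∅) (Nat.zero_le _)
  | succ k ih =>
    by_cases hk : k < n
    · obtain ⟨ih1, ih2⟩ := ih
      have hWT : B ∩ T ⟨k, hk⟩ ⊆ T ⟨k, hk⟩ := Finset.inter_subset_right
      have hBSk : B ∩ layerUnion n T k ⊆ layerUnion n T k := Finset.inter_subset_right
      have hdisjTS : Disjoint (T ⟨k, hk⟩) (layerUnion n T k) :=
        disjoint_layerUnion hdisj (le_refl k)
      have hspan : rkOf M.Indep (((B ∩ T ⟨k, hk⟩) ∪ layerUnion n T k) ∪ T ⟨k, hk⟩)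
          = rkOf M.Indep ((B ∩ T ⟨k, hk⟩) ∪ layerUnion n T k) :=
        rk_union_eq_of_spans_each M (fun t ht => hmax k hk t ht)
      have hset1 : ((B ∩ T ⟨k, hk⟩) ∪ layerUnion n T k) ∪ T ⟨k, hk⟩
          = layerUnion n T k ∪ T ⟨k, hk⟩ := by
        ext x
        have hw : x ∈ B ∩ T ⟨k, hk⟩ → x ∈ T ⟨k, hk⟩ := fun h => hWT h
        simp only [Finset.mem_union]
        tauto
      have hsucc := layerUnion_succ T hk
      have hcard : (B ∩ (layerUnion n T k ∪ T ⟨k, hk⟩)).card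
          = (B ∩ layerUnion n T k).card + (B ∩ T ⟨k, hk⟩).card := by
        rw [Finset.inter_union_distrib_left]
        exact Finset.card_union_of_disjoint (hdisjTS.symm.mono hBSk hWT)
      have hr1 : rkOf M.Indep (layerUnion n T k ∪ T ⟨k, hk⟩)
          = (B ∩ layerUnion n T k).card + (B ∩ T ⟨k, hk⟩).card := by
        rw [← hset1, hspan, hind k hk, ih1]
      constructor
      · rw [hsucc, hr1, hcard]
      · rw [hsucc]
        have hZ : rkOf M.Indep ((B ∩ layerUnion n T k) ∪ layerUnion n T k)
            = rkOf M.Indep (B ∩ layerUnion n T k) := by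
          rw [Finset.union_eq_right.mpr hBSk, ih1, ih2]
        have h2 := rk_union_eq_of_spans M (X := B ∩ T ⟨k, hk⟩)
          (Z := B ∩ layerUnion n T k) (Y := layerUnion n T k) hZ
        have hset2 : (B ∩ T ⟨k, hk⟩) ∪ (B ∩ layerUnion n T k) ∪ layerUnion n T k
            = (B ∩ T ⟨k, hk⟩) ∪ layerUnion n T k := by
          ext x
          have hw : x ∈ B ∩ layerUnion n T k → x ∈ layerUnion n T k := fun h => hBSk h
          simp only [Finset.mem_union]
          tauto
        rw [hset2] at h2
        have hset3 : B ∩ (layerUnion n T k ∪ T ⟨k, hk⟩)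
            = (B ∩ T ⟨k, hk⟩) ∪ (B ∩ layerUnion n T k) := by
          rw [Finset.inter_union_distrib_left]
          exact Finset.union_comm _ _
        rw [hset3, ← h2, hind k hk, ih1,
          Finset.card_union_of_disjoint (hdisjTS.mono hWT hBSk)]
        omega
    · rw [layerUnion_succ_ge T (by omega)]
      exact ih

end FundAux

/-- `pre e f` means `e ≽_H f`.  Setting as in the layered construction `H⟨F⟩`:
`B` is a base of the direct sum of the summand matroids `(H / T_{1,i-1}) | T i`,
`e ∈ F \ B`, `CF` is the fundamental circuit of `e` for `B` in `H⟨F⟩`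
(the unique circuit of `H⟨F⟩` contained in `B + e`), and `CH` is the fundamental
circuit of `e` for `B` in `H`.  Then (a) `CF` is a circuit of some summand
matroid, (b) `CF ⊆ CH`, and (c) `g ≻_H f` for every `f ∈ CF` and
`g ∈ CH \ CF`. -/
theorem fund_circuit_of_layered_direct_sum (M : FinMatroid U) (pre : U → U → Prop)
    (htrans : Transitive pre) (htot : ∀ a b : U, pre a b ∨ pre b a)
    (F : Finset U) (n : ℕ) (T : Fin n → Finset U)
    (hne : ∀ i, (T i).Nonempty)
    (hdisj : ∀ i j : Fin n, i ≠ j → Disjoint (T i) (T j))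
    (hunion : Finset.univ.biUnion T = F)
    (hwithin : ∀ i : Fin n, ∀ e ∈ T i, ∀ f ∈ T i, pre e f)
    (hacross : ∀ i j : Fin n, i < j → ∀ e ∈ T i, ∀ f ∈ T j, pre e f ∧ ¬ pre f e)
    (B : Finset U)
    (hB : BaseOf (fun I => I ⊆ F ∧ ∀ i : Fin n,
      RestrictIndep (ContractIndepOf M.Indep
        ((Finset.univ.filter (fun j : Fin n => j < i)).biUnion T)) (T i) (I ∩ T i)) B)
    (e : U) (he : e ∈ F \ B)
    (CF : Finset U)
    (hCF : CircuitOf (fun I => I ⊆ F ∧ ∀ i : Fin n,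
      RestrictIndep (ContractIndepOf M.Indep
        ((Finset.univ.filter (fun j : Fin n => j < i)).biUnion T)) (T i) (I ∩ T i)) CF)
    (hCFsub : CF ⊆ insert e B)
    (CH : Finset U) (hCH : M.Circuit CH) (hCHsub : CH ⊆ insert e B) :
    (∃ z : Fin n, CircuitOf
        (RestrictIndep (ContractIndepOf M.Indep
          ((Finset.univ.filter (fun j : Fin n => j < z)).biUnion T)) (T z)) CF) ∧
      CF ⊆ CH ∧
      ∀ f ∈ CF, ∀ g ∈ CH, g ∉ CF → (pre g f ∧ ¬ pre f g) := by
  classical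
  obtain ⟨⟨hBF, hBind⟩, hBmax⟩ := hB
  obtain ⟨heF, heB⟩ := Finset.mem_sdiff.mp he
  have hinsF : insert e B ⊆ F := Finset.insert_subset heF hBF
  have hCFF : CF ⊆ F := hCFsub.trans hinsF
  have hSL : ∀ i : Fin n,
      (Finset.univ.filter (fun j : Fin n => j < i)).biUnion T
        = FundAux.layerUnion n T (i : ℕ) := by
    intro i
    unfold FundAux.layerUnion
    congr 1
  have hTF : ∀ i : Fin n, T i ⊆ F := by
    intro i; rw [← hunion]
    exact Finset.subset_biUnion_of_mem T (Finset.mem_univ i)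
  have hBcomp : ∀ i : Fin n,
      ContractIndepOf M.Indep (FundAux.layerUnion n T (i : ℕ)) (B ∩ T i) := by
    intro i
    have h := (hBind i).2
    rwa [hSL i] at h
  have hTdisjL : ∀ i : Fin n, Disjoint (T i) (FundAux.layerUnion n T (i : ℕ)) :=
    fun i => FundAux.disjoint_layerUnion hdisj (le_refl _)
  have hmaxrk : ∀ (i : Fin n), ∀ t ∈ T i,
      rkOf M.Indep (insert t ((B ∩ T i) ∪ FundAux.layerUnion n T (i : ℕ)))
        = rkOf M.Indep ((B ∩ T i) ∪ FundAux.layerUnion n T (i : ℕ)) := by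
    intro i t ht
    by_cases htB : t ∈ B
    · rw [Finset.insert_eq_self.mpr
        (Finset.mem_union_left _ (Finset.mem_inter.mpr ⟨htB, ht⟩))]
    · have hnc : ¬ ContractIndepOf M.Indep (FundAux.layerUnion n T (i : ℕ))
          (insert t (B ∩ T i)) := by
        intro hc
        have hJ : (fun I => I ⊆ F ∧ ∀ i : Fin n, RestrictIndep (ContractIndepOf M.Indep
            ((Finset.univ.filter (fun j : Fin n => j < i)).biUnion T)) (T i) (I ∩ T i))
            (insert t B) := by
          refine ⟨Finset.insert_subset (hTF i ht) hBF, fun i' => ?_⟩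
          by_cases hii : i' = i
          · subst hii
            have hset : (insert t B) ∩ T i' = insert t (B ∩ T i') := by
              ext x
              simp only [Finset.mem_inter, Finset.mem_insert]
              constructor
              · rintro ⟨h1 | h1, h2⟩
                · exact Or.inl h1
                · exact Or.inr ⟨h1, h2⟩
              · rintro (h1 | ⟨h1, h2⟩)
                · exact ⟨Or.inl h1, h1 ▸ ht⟩
                · exact ⟨Or.inr h1, h2⟩
            rw [hset]
            refine ⟨Finset.insert_subset ht Finset.inter_subset_right, ?_⟩
            rw [hSL i']
            exact hc
          · have hset : (insert t B) ∩ T i' = B ∩ T i' := by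
              ext x
              simp only [Finset.mem_inter, Finset.mem_insert]
              constructor
              · rintro ⟨h1 | h1, h2⟩
                · subst h1
                  exact absurd h2
                    (Finset.disjoint_left.mp (hdisj i i' (fun h => hii h.symm)) ht)
                · exact ⟨h1, h2⟩
              · rintro ⟨h1, h2⟩; exact ⟨Or.inr h1, h2⟩
            rw [hset]
            exact hBind i'
        have heq := hBmax _ hJ (Finset.subset_insert t B)
        exact htB (heq ▸ Finset.mem_insert_self t B)
      have hdis : Disjoint (insert t (B ∩ T i)) (FundAux.layerUnion n T (i : ℕ)) :=
        (hTdisjL i).mono_left (Finset.insert_subset ht Finset.inter_subset_right)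
      have hrne : rkOf M.Indep (insert t (B ∩ T i) ∪ FundAux.layerUnion n T (i : ℕ))
          ≠ rkOf M.Indep (FundAux.layerUnion n T (i : ℕ)) + (insert t (B ∩ T i)).card :=
        fun h => hnc ⟨hdis, h⟩
      rw [Finset.card_insert_of_notMem (fun h => htB (Finset.mem_inter.mp h).1)] at hrne
      have hup : rkOf M.Indep (insert t ((B ∩ T i) ∪ FundAux.layerUnion n T (i : ℕ)))
          ≤ rkOf M.Indep ((B ∩ T i) ∪ FundAux.layerUnion n T (i : ℕ)) + 1 :=
        FundAux.rk_insert_le M _ t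
      have hlow : rkOf M.Indep ((B ∩ T i) ∪ FundAux.layerUnion n T (i : ℕ))
          ≤ rkOf M.Indep (insert t ((B ∩ T i) ∪ FundAux.layerUnion n T (i : ℕ))) :=
        FundAux.rk_mono M (Finset.subset_insert _ _)
      have hrc := (hBcomp i).2
      rw [Finset.insert_union] at hrne
      omega
  have hPk := FundAux.step_rank M hdisj B
    (fun k hk => (hBcomp ⟨k, hk⟩).2)
    (fun k hk t ht => hmaxrk ⟨k, hk⟩ t ht)
  have hLn : FundAux.layerUnion n T n = F := by
    rw [← hunion]
    ext x
    simp only [FundAux.layerUnion, Finset.mem_biUnion, Finset.mem_filter,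
      Finset.mem_univ, true_and]
    constructor
    · rintro ⟨j, _, hx⟩
      exact ⟨j, hx⟩
    · rintro ⟨j, hx⟩
      exact ⟨j, j.isLt, hx⟩
  have hBindep : M.Indep B := by
    have h := (hPk n).2
    rw [hLn, Finset.inter_eq_left.mpr hBF] at h
    exact FundAux.indep_of_rk_eq_card M h
  have hnall : ¬ ∀ i : Fin n, RestrictIndep (ContractIndepOf M.Indep
      ((Finset.univ.filter (fun j : Fin n => j < i)).biUnion T)) (T i) (CF ∩ T i) :=
    fun h => hCF.1 ⟨hCFF, h⟩
  push_neg at hnall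
  obtain ⟨z, hz⟩ := hnall
  have hsubz : CF ⊆ T z := by
    by_contra hns
    obtain ⟨x, hx, hxT⟩ := Finset.not_subset.mp hns
    have hss : CF ∩ T z ⊂ CF :=
      (Finset.ssubset_iff_of_subset Finset.inter_subset_left).mpr
        ⟨x, hx, fun h => hxT (Finset.mem_inter.mp h).2⟩
    have h := (hCF.2 _ hss).2 z
    rw [Finset.inter_assoc, Finset.inter_self] at h
    exact hz h
  have hCFTz : CF ∩ T z = CF := Finset.inter_eq_left.mpr hsubz
  rw [hCFTz] at hz
  have parta : CircuitOf (RestrictIndep (ContractIndepOf M.Indep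
      ((Finset.univ.filter (fun j : Fin n => j < z)).biUnion T)) (T z)) CF := by
    refine ⟨hz, fun D hD => ?_⟩
    have h := (hCF.2 D hD).2 z
    rwa [Finset.inter_eq_left.mpr (hD.subset.trans hsubz)] at h
  have hCFdisL : Disjoint CF (FundAux.layerUnion n T (z : ℕ)) :=
    (hTdisjL z).mono_left hsubz
  have hnc : ¬ ContractIndepOf M.Indep (FundAux.layerUnion n T (z : ℕ)) CF := by
    intro hc
    refine hz ⟨hsubz, ?_⟩
    rw [hSL z]
    exact hc
  have hrneCF : rkOf M.Indep (CF ∪ FundAux.layerUnion n T (z : ℕ))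
      ≠ rkOf M.Indep (FundAux.layerUnion n T (z : ℕ)) + CF.card :=
    fun h => hnc ⟨hCFdisL, h⟩
  have hleCF : rkOf M.Indep (CF ∪ FundAux.layerUnion n T (z : ℕ))
      ≤ rkOf M.Indep (FundAux.layerUnion n T (z : ℕ)) + CF.card := by
    have h := FundAux.rk_union_card_le M (FundAux.layerUnion n T (z : ℕ)) CF
    rwa [Finset.union_comm] at h
  have hAsub : B ∩ FundAux.layerUnion n T (z : ℕ) ⊆ FundAux.layerUnion n T (z : ℕ) :=
    Finset.inter_subset_right
  have htransfer : ∀ X : Finset U, rkOf M.Indep (X ∪ FundAux.layerUnion n T (z : ℕ))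
      = rkOf M.Indep (X ∪ (B ∩ FundAux.layerUnion n T (z : ℕ))) := by
    intro X
    have hZ : rkOf M.Indep ((B ∩ FundAux.layerUnion n T (z : ℕ))
          ∪ FundAux.layerUnion n T (z : ℕ))
        = rkOf M.Indep (B ∩ FundAux.layerUnion n T (z : ℕ)) := by
      rw [Finset.union_eq_right.mpr hAsub, (hPk (z : ℕ)).1, (hPk (z : ℕ)).2]
    have h2 := FundAux.rk_union_eq_of_spans M (X := X)
      (Z := B ∩ FundAux.layerUnion n T (z : ℕ)) (Y := FundAux.layerUnion n T (z : ℕ)) hZ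
    have hset : X ∪ (B ∩ FundAux.layerUnion n T (z : ℕ)) ∪ FundAux.layerUnion n T (z : ℕ)
        = X ∪ FundAux.layerUnion n T (z : ℕ) := by
      ext x
      have hw : x ∈ B ∩ FundAux.layerUnion n T (z : ℕ) →
          x ∈ FundAux.layerUnion n T (z : ℕ) := fun h => hAsub h
      simp only [Finset.mem_union]
      tauto
    rw [hset] at h2
    exact h2
  have hA : rkOf M.Indep (FundAux.layerUnion n T (z : ℕ))
      = (B ∩ FundAux.layerUnion n T (z : ℕ)).card := (hPk (z : ℕ)).1
  have hKf : ∀ f ∈ CF, M.Indep (CF.erase f ∪ (B ∩ FundAux.layerUnion n T (z : ℕ))) := by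
    intro f hf
    have hss : CF.erase f ⊂ CF := Finset.erase_ssubset hf
    have hind := (hCF.2 _ hss).2 z
    rw [Finset.inter_eq_left.mpr ((Finset.erase_subset f CF).trans hsubz), hSL z] at hind
    have hrk := hind.2.2
    have htr := htransfer (CF.erase f)
    have hcard : (CF.erase f ∪ (B ∩ FundAux.layerUnion n T (z : ℕ))).card
        = (CF.erase f).card + (B ∩ FundAux.layerUnion n T (z : ℕ)).card :=
      Finset.card_union_of_disjoint
        (hCFdisL.mono (Finset.erase_subset f CF) Finset.inter_subset_right)
    apply FundAux.indep_of_rk_eq_card M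
    rw [← htr, hrk, hA, hcard]
    omega
  have hDdep : ¬ M.Indep (CF ∪ (B ∩ FundAux.layerUnion n T (z : ℕ))) := by
    intro hI
    have h1 := FundAux.card_le_rk M hI (Finset.Subset.refl _)
    rw [← htransfer CF] at h1
    have hcard : (CF ∪ (B ∩ FundAux.layerUnion n T (z : ℕ))).card
        = CF.card + (B ∩ FundAux.layerUnion n T (z : ℕ)).card :=
      Finset.card_union_of_disjoint (hCFdisL.mono_right Finset.inter_subset_right)
    omega
  have hDsub : CF ∪ (B ∩ FundAux.layerUnion n T (z : ℕ)) ⊆ insert e B :=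
    Finset.union_subset hCFsub
      (Finset.inter_subset_left.trans (Finset.subset_insert e B))
  obtain ⟨C, hCsub, hC⟩ := FundAux.exists_circuit_subset M _ hDdep
  have hCCH : C = CH := FundAux.circuit_unique M hBindep hC hCH (hCsub.trans hDsub) hCHsub
  have hCHD : CH ⊆ CF ∪ (B ∩ FundAux.layerUnion n T (z : ℕ)) := hCCH ▸ hCsub
  have partb : CF ⊆ CH := by
    intro f hf
    by_contra hfCH
    have hsubK : CH ⊆ CF.erase f ∪ (B ∩ FundAux.layerUnion n T (z : ℕ)) := by
      intro x hx
      rcases Finset.mem_union.mp (hCHD hx) with h | h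
      · exact Finset.mem_union_left _ (Finset.mem_erase.mpr ⟨fun hxf => hfCH (hxf ▸ hx), h⟩)
      · exact Finset.mem_union_right _ h
    exact hCH.1 (M.subset_indep hsubK (hKf f hf))
  refine ⟨⟨z, parta⟩, partb, ?_⟩
  intro f hf g hg hgCF
  have hgD := hCHD hg
  have hgA : g ∈ B ∩ FundAux.layerUnion n T (z : ℕ) := by
    rcases Finset.mem_union.mp hgD with h | h
    · exact absurd h hgCF
    · exact h
  have hgL : g ∈ FundAux.layerUnion n T (z : ℕ) := (Finset.mem_inter.mp hgA).2
  rw [FundAux.layerUnion] at hgL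
  obtain ⟨i, hi, hgT⟩ := Finset.mem_biUnion.mp hgL
  rw [Finset.mem_filter] at hi
  exact hacross i z (Fin.lt_def.mpr hi.2) g hgT f (hsubz hf)
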